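/- arXiv:2212.00123 — 2 statements merged into one kernel-verified Lean document; each statement's English description precedes it below -/
import Mathlib

section
/- A nonempty cyclically reduced word w is a proper power (i.e., w = v^m as a concatenation of letter sequences for some nonempty word v and some m ≥ 2) if and only if every cyclic rotation w' of w can be written as a concatenation w' = t ++ v ++ t with t a nonempty sequence (v possibly empty). -/
open List

/-- A letter of the free group `F_n`: a generator index together with a sign. -/
abbrev Letter (n : ℕ) := Fin n × Bool

/-- The inverse of a letter. -/
def linv {n : ℕ} (a : Letter n) : Letter n := (a.1, !a.2)

@[simp] lemma linv_linv {n : ℕ} (a : Letter n) : linv (linv a) = a := by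
  cases a with
  | mk x b => simp [linv]

/-- The (formal) inverse of a word. -/
def wInv {n : ℕ} (w : List (Letter n)) : List (Letter n) := (w.map linv).reverse

@[simp] lemma wInv_wInv {n : ℕ} (w : List (Letter n)) : wInv (wInv w) = w := by
  simp [wInv, Function.comp_def]

/-- A word is reduced if no two consecutive letters are mutually inverse. -/
def Reduced {n : ℕ} (w : List (Letter n)) : Prop :=
  List.Chain' (fun a b => b ≠ linv a) w

/-- A word is cyclically reduced if it is reduced and its first and last letters
are not mutually inverse. -/
def CyclicallyReduced {n : ℕ} (w : List (Letter n)) : Prop :=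
  Reduced w ∧ ∀ a b, w.head? = some a → w.getLast? = some b → a ≠ linv b

/-- `lpow l m` is the `m`-fold concatenation of the list `l` with itself. -/
def lpow {α : Type*} (l : List α) : ℕ → List α
  | 0 => []
  | m + 1 => l ++ lpow l m

/-- The number of oriented occurrences of `u` in the cyclic word represented by `w`. -/
def orientedOcc {n : ℕ} (u w : List (Letter n)) : ℕ :=
  ((Finset.range w.length).filter (fun i => u <+: lpow (w.rotate i) (u.length + 1))).card

/-- `occ u w` : occurrences of the unoriented word `{u, u⁻¹}` in the cyclic word
represented by `w`. -/
def occ {n : ℕ} (u w : List (Letter n)) : ℕ :=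
  orientedOcc u w + orientedOcc (wInv u) w

lemma occ_wInv {n : ℕ} (u w : List (Letter n)) : occ (wInv u) w = occ u w := by
  simp [occ, wInv_wInv, Nat.add_comm]

/-- Occurrences of `u` as a contiguous factor of `w`. -/
def factOcc {n : ℕ} (u w : List (Letter n)) : ℕ :=
  ((Finset.range (w.length + 1)).filter (fun i => u <+: w.drop i)).card

/-- `occf u w` : occurrences of `{u, u⁻¹}` as a contiguous factor of `w`. -/
def occf {n : ℕ} (u w : List (Letter n)) : ℕ := factOcc u w + factOcc (wInv u) w

/-- Two cyclically reduced words represent the same cyclic word iff one is a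
rotation of the other or of its inverse. -/
def SameCyclicWord {n : ℕ} (v w : List (Letter n)) : Prop :=
  (∃ i, w = v.rotate i) ∨ (∃ i, w = (wInv v).rotate i)

/-- Cyclic reduction: repeatedly delete the first and last letter while they are
mutually inverse. -/
def cyclicReduce {n : ℕ} : List (Letter n) → List (Letter n)
  | [] => []
  | a :: rest =>
    if rest.getLast? = some (linv a) then cyclicReduce rest.dropLast
    else a :: rest
  termination_by w => w.length
  decreasing_by simp [List.length_dropLast]


section PowAux

variable {α : Type*}

lemma lpow_succ (l : List α) (m : ℕ) : lpow l (m + 1) = l ++ lpow l m := rfl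

lemma lpow_nil (m : ℕ) : lpow ([] : List α) m = [] := by
  induction m with
  | zero => rfl
  | succ k ih => rw [lpow_succ, ih]; rfl

lemma lpow_succ' (l : List α) : ∀ m, lpow l (m + 1) = lpow l m ++ l
  | 0 => by simp [lpow_succ, lpow]
  | (m + 1) => by
    rw [lpow_succ l (m + 1)]
    conv_lhs => rw [lpow_succ' l m]
    rw [lpow_succ l m]
    simp

lemma lpow_add (l : List α) (a b : ℕ) : lpow l (a + b) = lpow l a ++ lpow l b := by
  induction a with
  | zero => simp [lpow]
  | succ k ih =>
    have h : k + 1 + b = (k + b) + 1 := by omega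
    rw [h, lpow_succ, lpow_succ, ih]
    simp

lemma lpow_length (l : List α) (m : ℕ) : (lpow l m).length = m * l.length := by
  induction m with
  | zero => simp [lpow]
  | succ k ih => rw [lpow_succ]; simp [ih]; ring

lemma lpow_swap (s t : List α) : ∀ m, lpow (s ++ t) m ++ s = s ++ lpow (t ++ s) m
  | 0 => by simp [lpow]
  | (m + 1) => by
    rw [lpow_succ, lpow_succ]
    have h := lpow_swap s t m
    simp only [List.append_assoc] at h ⊢
    rw [h]

lemma lpow_rotate (v : List α) (m j : ℕ) :
    (lpow v m).rotate j = lpow (v.rotate j) m := by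
  rcases eq_or_ne v ([] : List α) with rfl | hv
  · simp [lpow_nil]
  rcases Nat.eq_zero_or_pos m with rfl | hm
  · simp [lpow]
  have hvlen : 0 < v.length := List.length_pos_iff.mpr hv
  obtain ⟨m', rfl⟩ : ∃ m', m = m' + 1 := ⟨m - 1, by omega⟩
  have hper : (lpow v (m' + 1)).rotate v.length = lpow v (m' + 1) := by
    rw [lpow_succ, List.rotate_append_length_eq, ← lpow_succ', lpow_succ]
  have hredL : ∀ q r, (lpow v (m' + 1)).rotate (v.length * q + r)
      = (lpow v (m' + 1)).rotate r := by
    intro q r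
    induction q with
    | zero => simp
    | succ k ih =>
      have h : v.length * (k + 1) + r = v.length + (v.length * k + r) := by ring
      rw [h, ← List.rotate_rotate, hper, ih]
  have hredR : ∀ q r, v.rotate (v.length * q + r) = v.rotate r := by
    intro q r
    induction q with
    | zero => simp
    | succ k ih =>
      have h : v.length * (k + 1) + r = v.length + (v.length * k + r) := by ring
      rw [h, ← List.rotate_rotate, List.rotate_length, ih]
  have hj : v.length * (j / v.length) + j % v.length = j := Nat.div_add_mod j v.length
  rw [← hj, hredL, hredR]
  set r := j % v.length with hr
  have hrlt : r < v.length := Nat.mod_lt _ hvlen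
  have hsplit : v.take r ++ v.drop r = v := List.take_append_drop r v
  have hslen : (v.take r).length = r := by
    rw [List.length_take]; omega
  have hlplen : r ≤ (lpow v (m' + 1)).length := by
    rw [lpow_length]
    have h1 : v.length ≤ (m' + 1) * v.length := Nat.le_mul_of_pos_left _ (by omega)
    omega
  rw [List.rotate_eq_drop_append_take hlplen, List.rotate_eq_drop_append_take hrlt.le]
  have hs : lpow v (m' + 1) = v.take r ++ (v.drop r ++ lpow v m') := by
    rw [lpow_succ, ← List.append_assoc, hsplit]
  rw [hs, List.drop_left' hslen, List.take_left' hslen]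
  have hlp : lpow v m' = lpow (v.take r ++ v.drop r) m' := by rw [hsplit]
  rw [List.append_assoc, hlp, lpow_swap, ← List.append_assoc, ← lpow_succ]

lemma lpow_ne_nil {l : List α} (hl : l ≠ []) {m : ℕ} (hm : 1 ≤ m) : lpow l m ≠ [] := by
  intro h
  have h2 := congrArg List.length h
  rw [lpow_length] at h2
  have h3 : l.length ≠ 0 := fun hh => hl (List.length_eq_zero_iff.mp hh)
  simp only [List.length_nil, Nat.mul_eq_zero] at h2
  rcases h2 with h1 | h1
  · omega
  · exact h3 h1

lemma comm_lpow : ∀ (k : ℕ) (t v : List α), t.length + v.length ≤ k →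
    t ++ v = v ++ t → ∃ z a b, t = lpow z a ∧ v = lpow z b := by
  intro k
  induction k with
  | zero =>
    intro t v hlen _
    have ht : t = [] := List.length_eq_zero_iff.mp (by omega)
    have hv : v = [] := List.length_eq_zero_iff.mp (by omega)
    exact ⟨[], 0, 0, by simp [ht, lpow], by simp [hv, lpow]⟩
  | succ k ih =>
    intro t v hlen heq
    rcases eq_or_ne t ([] : List α) with rfl | ht
    · exact ⟨v, 0, 1, by simp [lpow], by simp [lpow_succ, lpow]⟩
    rcases eq_or_ne v ([] : List α) with rfl | hv
    · exact ⟨t, 1, 0, by simp [lpow_succ, lpow], by simp [lpow]⟩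
    have htpos : 0 < t.length := List.length_pos_iff.mpr ht
    have hvpos : 0 < v.length := List.length_pos_iff.mpr hv
    rcases le_total t.length v.length with hle | hle
    · have htake : v.take t.length = t := by
        have h1 := congrArg (List.take t.length) heq
        rw [List.take_left, List.take_append] at h1
        rw [show t.length - v.length = 0 by omega] at h1
        simp at h1
        exact h1.symm
      set r := v.drop t.length with hrdef
      have hv2 : v = t ++ r := by rw [← htake, hrdef, List.take_append_drop]
      have heq2 : t ++ r = r ++ t := by
        apply List.append_cancel_left (as := t)
        have h3 := heq
        rw [hv2] at h3
        simpa [List.append_assoc] using h3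
      have hrlen : r.length = v.length - t.length := by
        rw [hrdef, List.length_drop]
      obtain ⟨z, a, b, hza, hzb⟩ := ih t r (by omega) heq2
      exact ⟨z, a, a + b, hza, by rw [hv2, lpow_add, hza, hzb]⟩
    · have htake : t.take v.length = v := by
        have h1 := congrArg (List.take v.length) heq.symm
        rw [List.take_left, List.take_append] at h1
        rw [show v.length - t.length = 0 by omega] at h1
        simp at h1
        exact h1.symm
      set r := t.drop v.length with hrdef
      have ht2 : t = v ++ r := by rw [← htake, hrdef, List.take_append_drop]
      have heq2 : v ++ r = r ++ v := by
        apply List.append_cancel_left (as := v)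
        have h3 := heq.symm
        rw [ht2] at h3
        simpa [List.append_assoc] using h3
      have hrlen : r.length = t.length - v.length := by
        rw [hrdef, List.length_drop]
      obtain ⟨z, a, b, hza, hzb⟩ := ih v r (by omega) heq2
      exact ⟨z, a + b, a, by rw [ht2, lpow_add, hza, hzb], hza⟩

end PowAux

section LexAux

variable {α : Type*} [LinearOrder α]

lemma lex_append_of_length_eq {c d : List α} :
    ∀ {y x : List α}, List.Lex (· < ·) y x → y.length = x.length →
      List.Lex (· < ·) (y ++ d) (x ++ c) := by
  intro y x h
  induction h with
  | nil => intro hlen; simp at hlen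
  | @cons a l₁ l₂ h ih =>
    intro hlen
    simp only [List.length_cons, Nat.add_right_cancel_iff] at hlen
    exact List.Lex.cons (ih hlen)
  | rel h => intro _; exact List.Lex.rel h

lemma le_of_append_le_left {c x y : List α} (h : c ++ x ≤ c ++ y) : x ≤ y := by
  by_contra hlt
  rw [not_le] at hlt
  have h2 : c ++ y < c ++ x := List.Lex.append_left (· < ·) hlt c
  exact absurd h (not_le.mpr h2)

lemma le_of_append_le_of_length_eq {x y c d : List α} (hlen : x.length = y.length)
    (h : x ++ c ≤ y ++ d) : x ≤ y := by
  by_contra hlt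
  rw [not_le] at hlt
  have h2 : y ++ d < x ++ c := lex_append_of_length_eq hlt hlen.symm
  exact absurd h (not_le.mpr h2)

end LexAux

noncomputable instance letterLinearOrder (n : ℕ) : LinearOrder (Letter n) :=
  LinearOrder.lift' (fun a => 2 * (a.1 : ℕ) + (if a.2 then 1 else 0)) (by
    rintro ⟨x, bx⟩ ⟨y, by'⟩ h
    simp only at h
    have hx : (x : ℕ) = y ∧ bx = by' := by
      cases bx <;> cases by' <;> simp at h ⊢ <;> omega
    exact Prod.ext (Fin.ext hx.1) hx.2)

/-- A nonempty cyclically reduced word `w` is a proper power iff every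
cyclic rotation of `w` can be written as `t ++ v ++ t` with `t` nonempty. -/
theorem properPower_iff_rotations_split (n : ℕ) (w : List (Letter n)) (hw : w ≠ [])
    (hcr : CyclicallyReduced w) :
    (∃ (v : List (Letter n)) (m : ℕ), v ≠ [] ∧ 2 ≤ m ∧ w = lpow v m) ↔
    (∀ i : ℕ, ∃ t v : List (Letter n), t ≠ [] ∧ w.rotate i = t ++ v ++ t) := by
  constructor
  · rintro ⟨v, m, hv, hm, rfl⟩ i
    obtain ⟨k, rfl⟩ : ∃ k, m = k + 2 := ⟨m - 2, by omega⟩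
    refine ⟨v.rotate i, lpow (v.rotate i) k, ?_, ?_⟩
    · intro h
      have h2 := congrArg List.length h
      rw [List.length_rotate] at h2
      exact hv (List.length_eq_zero_iff.mp h2)
    · rw [lpow_rotate]
      rw [show k + 2 = (k + 1) + 1 from rfl, lpow_succ, lpow_succ']
      simp
  · intro h
    have hN : 0 < w.length := List.length_pos_iff.mpr hw
    obtain ⟨i0, hi0mem, hmin⟩ := Finset.exists_min_image (Finset.range w.length)
      (fun i => w.rotate i) ⟨0, Finset.mem_range.mpr hN⟩
    have hi0 : i0 < w.length := Finset.mem_range.mp hi0mem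
    set u := w.rotate i0 with hu
    have hulen : u.length = w.length := List.length_rotate w i0
    have hmin' : ∀ j : ℕ, u ≤ w.rotate j := by
      intro j
      have h1 : w.rotate j = w.rotate (j % w.length) := (List.rotate_mod w j).symm
      rw [h1]
      exact hmin _ (Finset.mem_range.mpr (Nat.mod_lt _ hN))
    have hminu : ∀ k : ℕ, u ≤ u.rotate k := by
      intro k
      rw [hu, List.rotate_rotate]
      exact hmin' _
    obtain ⟨t, v, ht, huv⟩ := h i0
    rw [← hu] at huv
    have hrot1 : u.rotate t.length = (v ++ t) ++ t := by
      rw [huv, List.append_assoc, List.rotate_append_length_eq, List.append_assoc]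
    have hrot2 : u.rotate (t ++ v).length = t ++ (t ++ v) := by
      rw [huv, List.rotate_append_length_eq]
    have h1 : t ++ v ≤ v ++ t := by
      have hle := hminu t.length
      rw [hrot1, huv] at hle
      exact le_of_append_le_of_length_eq (by simp [Nat.add_comm]) hle
    have h2 : v ++ t ≤ t ++ v := by
      have hle := hminu (t ++ v).length
      rw [hrot2, huv] at hle
      rw [List.append_assoc] at hle
      exact le_of_append_le_left hle
    have hcomm : t ++ v = v ++ t := le_antisymm h1 h2
    obtain ⟨z, a, b, hza, hzb⟩ := comm_lpow (t.length + v.length) t v le_rfl hcomm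
    have hz : z ≠ [] := by
      intro hznil
      rw [hznil, lpow_nil] at hza
      exact ht hza
    have ha : 1 ≤ a := by
      by_contra hh
      have h3 : a = 0 := by omega
      rw [h3] at hza
      exact ht hza
    have hupow : u = lpow z (a + (b + a)) := by
      rw [lpow_add, lpow_add, huv, hza, hzb, List.append_assoc]
    have hwu : w = u.rotate (w.length - i0) := by
      rw [hu, List.rotate_rotate, show i0 + (w.length - i0) = w.length by omega,
        List.rotate_length]
    refine ⟨z.rotate (w.length - i0), a + (b + a), ?_, by omega, ?_⟩
    · intro hh
      have h2 := congrArg List.length hh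
      rw [List.length_rotate] at h2
      exact hz (List.length_eq_zero_iff.mp h2)
    · conv_lhs => rw [hwu, hupow]
      rw [lpow_rotate]
end

section
/- Let n ≥ 2, k ≥ 2, and fix any orientation section σ. Then the image of p←_k − p→_k : M_k → M_{k−1} equals the set of vectors in M_{k−1} whose sum of coordinates is even; consequently the cokernel of p←_k − p→_k is isomorphic to ℤ/2ℤ. -/
open List

/-- Oriented reduced words of length `k`. -/
structure RW (n k : ℕ) where
  val : List (Letter n)
  red : Reduced val
  len : val.length = k

instance (n k : ℕ) : DecidableEq (RW n k) := fun a b =>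
  decidable_of_iff (a.val = b.val)
    ⟨fun h => by cases a; cases b; cases h; rfl, fun h => congrArg RW.val h⟩

/-- Identify a reduced word with its inverse: the quotient is the set `W_k` of
unoriented words of length `k`. -/
instance uwSetoid (n k : ℕ) : Setoid (RW n k) where
  r u v := v.val = u.val ∨ v.val = wInv u.val
  iseqv := by
    refine ⟨fun u => Or.inl rfl, ?_, ?_⟩
    · rintro u v (h | h)
      · exact Or.inl h.symm
      · exact Or.inr (by rw [h, wInv_wInv])
    · rintro u v w (h1 | h1) (h2 | h2)
      · exact Or.inl (h2.trans h1)
      · exact Or.inr (h2.trans (congrArg wInv h1))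
      · exact Or.inr (h2.trans h1)
      · exact Or.inl (by rw [h2, h1, wInv_wInv])

instance (n k : ℕ) : ∀ a b : RW n k, Decidable (a ≈ b) := fun a b =>
  show Decidable (b.val = a.val ∨ b.val = wInv a.val) from inferInstance

/-- `W_k` : unoriented reduced words of length `k`. -/
abbrev UW (n k : ℕ) := Quotient (uwSetoid n k)

def toVec (n k : ℕ) (u : RW n k) : List.Vector (Letter n) k := ⟨u.val, u.len⟩

lemma toVec_inj (n k : ℕ) : Function.Injective (toVec n k) := by
  intro a b h
  have h' : a.val = b.val := congrArg Subtype.val h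
  cases a; cases b; cases h'; rfl

noncomputable instance (n k : ℕ) : Fintype (RW n k) :=
  Fintype.ofInjective _ (toVec_inj n k)

noncomputable example (n k : ℕ) : Fintype (UW n k) := inferInstance
noncomputable example (n k : ℕ) : DecidableEq (UW n k) := inferInstance

/-- `M_k` : the free ℤ-module on `W_k`, realized as functions `W_k → ℤ`. -/
abbrev Mk (n k : ℕ) := UW n k → ℤ

/-- `π_k` of the cyclic word represented by `w` : the vector of occurrence counts
of unoriented words of length `k`. -/
def pik (n k : ℕ) (w : List (Letter n)) : Mk n k :=
  Quotient.lift (fun u : RW n k => (occ u.val w : ℤ)) (by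
    intro a b hab
    have h : occ a.val w = occ b.val w := by
      rcases hab with h | h
      · rw [h]
      · rw [h, occ_wInv]
    show ((occ a.val w : ℕ) : ℤ) = ((occ b.val w : ℕ) : ℤ)
    rw [h])

lemma Reduced.drop' {n : ℕ} {w : List (Letter n)} (h : Reduced w) (m : ℕ) :
    Reduced (w.drop m) :=
  List.IsChain.suffix h (List.drop_suffix m w)

lemma Reduced.dropLast' {n : ℕ} {w : List (Letter n)} (h : Reduced w) :
    Reduced w.dropLast :=
  List.IsChain.prefix h (List.dropLast_prefix w)

/-- The unoriented `(k-1)`-suffix of an oriented word of length `k`. -/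
def sufC {n k : ℕ} (w : RW n k) : UW n (k - 1) :=
  Quotient.mk (uwSetoid n (k - 1)) ⟨w.val.drop 1, w.red.drop' 1, by simp [w.len]⟩

/-- The unoriented `(k-1)`-prefix of an oriented word of length `k`. -/
def preC {n k : ℕ} (w : RW n k) : UW n (k - 1) :=
  Quotient.mk (uwSetoid n (k - 1)) ⟨w.val.dropLast, w.red.dropLast', by simp [w.len]⟩

/-- Matrix of `p←_k` w.r.t. the orientation section `σ`: a basis element `w̄` of `M_k`
is sent to the sum of the unoriented `(k-1)`-words at its outward-pointing ends. -/
noncomputable def AOut (n k : ℕ) (σ : List (Letter n) → List (Letter n)) :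
    Matrix (UW n (k - 1)) (UW n k) ℤ := fun ub wb =>
  ∑ w : RW n k,
    if Quotient.mk (uwSetoid n k) w = wb ∧ σ w.val = w.val then
      ((if sufC w = ub ∧ σ (w.val.drop 1) = w.val.drop 1 then 1 else 0) +
       (if preC w = ub ∧ σ (w.val.dropLast) = wInv (w.val.dropLast) then 1 else 0))
    else 0

/-- Matrix of `p→_k` : inward-pointing ends. -/
noncomputable def AIn (n k : ℕ) (σ : List (Letter n) → List (Letter n)) :
    Matrix (UW n (k - 1)) (UW n k) ℤ := fun ub wb =>
  ∑ w : RW n k,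
    if Quotient.mk (uwSetoid n k) w = wb ∧ σ w.val = w.val then
      ((if sufC w = ub ∧ σ (w.val.drop 1) = wInv (w.val.drop 1) then 1 else 0) +
       (if preC w = ub ∧ σ (w.val.dropLast) = w.val.dropLast then 1 else 0))
    else 0

/-- `p←_k : M_k → M_{k-1}`. -/
noncomputable def pOut (n k : ℕ) (σ : List (Letter n) → List (Letter n)) :
    Mk n k →ₗ[ℤ] Mk n (k - 1) := (AOut n k σ).mulVecLin

/-- `p→_k : M_k → M_{k-1}`. -/
noncomputable def pIn (n k : ℕ) (σ : List (Letter n) → List (Letter n)) :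
    Mk n k →ₗ[ℤ] Mk n (k - 1) := (AIn n k σ).mulVecLin


/- ### Auxiliary development -/

section Aux

variable {n : ℕ}

lemma linv_ne_self (a : Letter n) : linv a ≠ a := by
  cases a with
  | mk x b => simp [linv]

@[simp] lemma wInv_length (w : List (Letter n)) : (wInv w).length = w.length := by
  simp [wInv]

lemma wInv_dropLast (w : List (Letter n)) : wInv w.dropLast = (wInv w).drop 1 := by
  rw [wInv, wInv, List.drop_one, List.map_dropLast, List.tail_reverse]

lemma wInv_dropOne (w : List (Letter n)) : wInv (w.drop 1) = (wInv w).dropLast := by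
  have h := wInv_dropLast (wInv w)
  rw [wInv_wInv] at h
  have := congrArg wInv h
  rw [wInv_wInv] at this
  exact this.symm

lemma Reduced.wInvR {w : List (Letter n)} (h : Reduced w) : Reduced (wInv w) := by
  rw [Reduced, List.Chain', wInv, List.isChain_reverse, List.isChain_map]
  refine h.imp ?_
  intro a b hab
  show linv a ≠ linv (linv b)
  rw [linv_linv]
  exact Ne.symm hab

lemma Reduced.takeR {w : List (Letter n)} (h : Reduced w) (m : ℕ) : Reduced (w.take m) :=
  List.IsChain.take h m

lemma ne_wInv_self {w : List (Letter n)} (hw : Reduced w) (h1 : 1 ≤ w.length) :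
    w ≠ wInv w := by
  intro he
  have key : ∀ i j (hi : i < w.length) (hj : j < w.length), i + j = w.length - 1 →
      w[i] = linv w[j] := by
    intro i j hi hj hij
    have h0 : w[i] = (wInv w)[i]'(by simpa using hi) := List.getElem_of_eq he hi
    have : w[i] = linv (w[w.length - 1 - i]'(by omega)) := by
      rw [h0]
      simp only [wInv, List.getElem_reverse, List.getElem_map]
      simp
    convert this using 3
    omega
  have chain : ∀ i j (hi : i < w.length) (hj : j < w.length), j = i + 1 →
      w[j] ≠ linv w[i] := by
    intro i j hi hj hij
    have h2 := List.isChain_iff_getElem.mp hw i (by omega)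
    convert h2 using 3
  set L := w.length with hL
  rcases Nat.even_or_odd L with hpar | hpar
  · obtain ⟨m, hm⟩ := hpar
    have hm1 : 1 ≤ m := by omega
    exact chain (m-1) m (by omega) (by omega) (by omega)
      (key m (m-1) (by omega) (by omega) (by omega))
  · obtain ⟨m, hm⟩ := hpar
    exact (linv_ne_self _) (key m m (by omega) (by omega) (by omega)).symm

lemma RW.ext' {m : ℕ} {u v : RW n m} (h : u.val = v.val) : u = v := by
  cases u; cases v; cases h; rfl

end Aux
section Aux2

variable {n : ℕ} (σ : List (Letter n) → List (Letter n))

/-- basis vector of a class -/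
noncomputable def eV {m : ℕ} (u : RW n m) : Mk n m :=
  fun c => if c = Quotient.mk (uwSetoid n m) u then (1 : ℤ) else 0

/-- the sign of an oriented word w.r.t. σ -/
def sgn {m : ℕ} (u : RW n m) : ℤ := if σ u.val = u.val then 1 else -1

/-- signed basis vector -/
noncomputable def fV {m : ℕ} (u : RW n m) : Mk n m := sgn σ u • eV u

lemma sgn_mul_self {m : ℕ} (u : RW n m) : sgn σ u * sgn σ u = 1 := by
  unfold sgn; split <;> norm_num

lemma eV_eq_fV {m : ℕ} (u : RW n m) : eV u = sgn σ u • fV σ u := by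
  rw [fV, smul_smul, sgn_mul_self, one_smul]

variable (hσ1 : ∀ u : List (Letter n), σ u = u ∨ σ u = wInv u)
variable (hσ2 : ∀ u : List (Letter n), σ (wInv u) = σ u)

include hσ1 in
lemma sigma_excl {u : List (Letter n)} (hu : Reduced u) (h1 : 1 ≤ u.length) :
    (σ u = wInv u) ↔ ¬ (σ u = u) := by
  constructor
  · intro h h'
    exact ne_wInv_self hu h1 (h'.symm.trans h)
  · intro h
    rcases hσ1 u with h' | h'
    · exact absurd h' h
    · exact h'

lemma class_eq_of_wInv {m : ℕ} {u v : RW n m} (h : u.val = wInv v.val) :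
    Quotient.mk (uwSetoid n m) u = Quotient.mk (uwSetoid n m) v := by
  apply Quotient.sound
  exact Or.inr (by rw [h, wInv_wInv])

include hσ1 hσ2 in
lemma fV_wInv {m : ℕ} (hm : 1 ≤ m) {u v : RW n m} (h : u.val = wInv v.val) :
    fV σ u = - fV σ v := by
  have hq := class_eq_of_wInv h
  have heV : eV u = eV (n := n) v := by
    funext c; rw [eV, eV, hq]
  have hsg : sgn σ u = - sgn σ v := by
    have hσu : σ u.val = σ v.val := by rw [h, hσ2]
    have hveq : wInv u.val = v.val := by rw [h, wInv_wInv]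
    rcases hσ1 v.val with h1 | h1
    · have : σ u.val = wInv u.val := by rw [hσu, h1, ← hveq]
      have hne : ¬ (σ u.val = u.val) := (sigma_excl σ hσ1 u.red (by rw [u.len]; exact hm)).mp this
      rw [sgn, sgn, if_neg hne, if_pos h1]
    · have : σ u.val = u.val := by rw [hσu, h1, ← h]
      have hne : ¬ (σ v.val = v.val) :=
        (sigma_excl σ hσ1 v.red (by rw [v.len]; exact hm)).mp h1
      rw [sgn, sgn, if_pos this, if_neg hne]
      norm_num
  rw [fV, fV, heV, hsg, neg_smul]

end Aux2

section Aux3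

variable {n k : ℕ} (σ : List (Letter n) → List (Letter n))

/-- suffix of a reduced k-word, as a reduced (k-1)-word -/
def sufRW (w : RW n k) : RW n (k - 1) :=
  ⟨w.val.drop 1, w.red.drop' 1, by simp [w.len]⟩

/-- prefix of a reduced k-word, as a reduced (k-1)-word -/
def preRW (w : RW n k) : RW n (k - 1) :=
  ⟨w.val.dropLast, w.red.dropLast', by simp [w.len]⟩

lemma sufC_eq (w : RW n k) : sufC w = Quotient.mk (uwSetoid n (k-1)) (sufRW w) := rfl
lemma preC_eq (w : RW n k) : preC w = Quotient.mk (uwSetoid n (k-1)) (preRW w) := rfl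

variable (hσ1 : ∀ u : List (Letter n), σ u = u ∨ σ u = wInv u)
variable (hσ2 : ∀ u : List (Letter n), σ (wInv u) = σ u)

include hσ1 hσ2 in
lemma column_eq (hk : 2 ≤ k) (w : RW n k) (hw : σ w.val = w.val) :
    (pOut n k σ - pIn n k σ) (eV w) = fV σ (sufRW w) - fV σ (preRW w) := by
  have hkk : w.val.length = k := w.len
  have hsufred : Reduced (w.val.drop 1) := w.red.drop' 1
  have hsuflen : 1 ≤ (w.val.drop 1).length := by simp [hkk]; omega
  have hprered : Reduced (w.val.dropLast) := w.red.dropLast'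
  have hprelen : 1 ≤ (w.val.dropLast).length := by simp [hkk]; omega
  have heV : eV w = Pi.single (Quotient.mk (uwSetoid n k) w) (1 : ℤ) := by
    funext c; rw [eV, Pi.single_apply]
  -- sum collapses to the single representative w
  have hcol : ∀ (A : Matrix (UW n (k-1)) (UW n k) ℤ)
      (F : RW n k → UW n (k-1) → ℤ)
      (hA : A = fun ub wb => ∑ w' : RW n k,
        if Quotient.mk (uwSetoid n k) w' = wb ∧ σ w'.val = w'.val then F w' ub else 0),
      ∀ ub, A ub (Quotient.mk (uwSetoid n k) w) = F w ub := by
    intro A F hA ub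
    simp only [hA]
    rw [Finset.sum_eq_single_of_mem w (Finset.mem_univ w)]
    · rw [if_pos ⟨rfl, hw⟩]
    · intro b _ hbw
      rw [if_neg]
      rintro ⟨hb1, hb2⟩
      rcases Quotient.exact hb1 with h | h
      · exact hbw (RW.ext' h.symm)
      · -- w.val = wInv b.val
        have : σ w.val = σ b.val := by rw [h, hσ2]
        rw [hw, hb2] at this
        have hbb : b.val = wInv b.val := by
          conv_lhs => rw [← this]
          exact h
        exact ne_wInv_self b.red (by rw [b.len]; omega) hbb
  funext ub
  have hOut := hcol (AOut n k σ)
    (fun w' ub => (if sufC w' = ub ∧ σ (w'.val.drop 1) = w'.val.drop 1 then 1 else 0) +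
       (if preC w' = ub ∧ σ (w'.val.dropLast) = wInv (w'.val.dropLast) then 1 else 0))
    rfl ub
  have hIn := hcol (AIn n k σ)
    (fun w' ub => (if sufC w' = ub ∧ σ (w'.val.drop 1) = wInv (w'.val.drop 1) then 1 else 0) +
       (if preC w' = ub ∧ σ (w'.val.dropLast) = w'.val.dropLast then 1 else 0))
    rfl ub
  have lhs_eq : (pOut n k σ - pIn n k σ) (eV w) ub
      = AOut n k σ ub (Quotient.mk (uwSetoid n k) w)
        - AIn n k σ ub (Quotient.mk (uwSetoid n k) w) := by
    rw [LinearMap.sub_apply, heV, pOut, pIn]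
    simp only [Matrix.mulVecLin_apply, Matrix.mulVec_single_one, Matrix.col_apply, Pi.sub_apply, mul_one]
  rw [lhs_eq, hOut, hIn]
  -- now pure case analysis
  have hsx := sigma_excl σ hσ1 hsufred hsuflen
  have hpx := sigma_excl σ hσ1 hprered hprelen
  have e1 : (fV σ (sufRW w)) ub
      = (if σ (w.val.drop 1) = w.val.drop 1 then (1:ℤ) else -1)
        * (if sufC w = ub then 1 else 0) := by
    rw [fV, Pi.smul_apply, sgn, eV, smul_eq_mul, sufC_eq]
    congr 1
    by_cases h : ub = Quotient.mk (uwSetoid n (k-1)) (sufRW w)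
    · rw [if_pos h, if_pos h.symm]
    · rw [if_neg h, if_neg (fun hh => h hh.symm)]
  have e2 : (fV σ (preRW w)) ub
      = (if σ (w.val.dropLast) = w.val.dropLast then (1:ℤ) else -1)
        * (if preC w = ub then 1 else 0) := by
    rw [fV, Pi.smul_apply, sgn, eV, smul_eq_mul, preC_eq]
    congr 1
    by_cases h : ub = Quotient.mk (uwSetoid n (k-1)) (preRW w)
    · rw [if_pos h, if_pos h.symm]
    · rw [if_neg h, if_neg (fun hh => h hh.symm)]
  rw [Pi.sub_apply, e1, e2]
  simp only [hsx, hpx]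
  by_cases hA : σ (w.val.drop 1) = w.val.drop 1 <;>
    by_cases hC : σ (w.val.dropLast) = w.val.dropLast <;>
    by_cases hB : sufC w = ub <;>
    by_cases hD : preC w = ub <;>
    simp [hA, hB, hC, hD, -List.drop_one] <;> ring
end Aux3
section Aux4

variable {n k : ℕ} (σ : List (Letter n) → List (Letter n))
variable (hσ1 : ∀ u : List (Letter n), σ u = u ∨ σ u = wInv u)
variable (hσ2 : ∀ u : List (Letter n), σ (wInv u) = σ u)

lemma fV_congr {m : ℕ} {u v : RW n m} (h : u.val = v.val) : fV σ u = fV σ v := by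
  rw [RW.ext' h]

include hσ1 hσ2 in
lemma edge_mem (hk : 2 ≤ k) (w : RW n k) :
    fV σ (sufRW w) - fV σ (preRW w) ∈ LinearMap.range (pOut n k σ - pIn n k σ) := by
  have hm1 : 1 ≤ k - 1 := by omega
  rcases hσ1 w.val with hw | hw
  · exact ⟨eV w, column_eq σ hσ1 hσ2 hk w hw⟩
  · set w' : RW n k := ⟨wInv w.val, w.red.wInvR, by simp [w.len]⟩ with hw'def
    have hw' : σ w'.val = w'.val := by
      show σ (wInv w.val) = wInv w.val
      rw [hσ2]; exact hw
    have e1 : fV σ (sufRW w') = - fV σ (preRW w) := by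
      apply fV_wInv σ hσ1 hσ2 hm1
      show (wInv w.val).drop 1 = wInv (w.val.dropLast)
      rw [wInv_dropLast]
    have e2 : fV σ (preRW w') = - fV σ (sufRW w) := by
      apply fV_wInv σ hσ1 hσ2 hm1
      show (wInv w.val).dropLast = wInv (w.val.drop 1)
      rw [wInv_dropOne]
    have hmem : fV σ (sufRW w') - fV σ (preRW w')
        ∈ LinearMap.range (pOut n k σ - pIn n k σ) :=
      ⟨eV w', column_eq σ hσ1 hσ2 hk w' hw'⟩
    rw [e1, e2] at hmem
    have h2 : - fV σ (preRW w) - - fV σ (sufRW w)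
        = fV σ (sufRW w) - fV σ (preRW w) := by abel
    rw [h2] at hmem
    exact hmem

include hσ1 hσ2 in
lemma telescope (hk : 2 ≤ k) :
    ∀ (N : ℕ) (L : List (Letter n)), L.length = N → Reduced L →
      k - 1 ≤ L.length → ∀ (a b : RW n (k-1)),
    a.val = L.drop (L.length - (k-1)) → b.val = L.take (k-1) →
    fV σ a - fV σ b ∈ LinearMap.range (pOut n k σ - pIn n k σ) := by
  intro N
  induction N with
  | zero =>
    intro L hlen hL hge a b ha hb
    exfalso; omega
  | succ N ih =>
    intro L hlen hL hge a b ha hb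
    by_cases hN : L.length = k - 1
    · have hab : a = b := by
        apply RW.ext'
        rw [ha, hb, hN, Nat.sub_self, List.drop_zero, ← hN, List.take_length]
      rw [hab, sub_self]
      exact zero_mem _
    · have hgt : k ≤ L.length := by omega
      set W : RW n k := ⟨L.take k, hL.takeR k, by simp; omega⟩ with hWdef
      have hedge := edge_mem σ hσ1 hσ2 hk W
      have hpre : (preRW W).val = L.take (k-1) := by
        show (L.take k).dropLast = L.take (k-1)
        rw [List.dropLast_eq_take, List.length_take, List.take_take]
        congr 1
        omega
      have hsuf : (sufRW W).val = (L.drop 1).take (k-1) := by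
        show (L.take k).drop 1 = (L.drop 1).take (k-1)
        rw [List.drop_take]
      have hdd : (L.drop 1).drop ((L.drop 1).length - (k-1)) = L.drop (L.length - (k-1)) := by
        rw [List.drop_drop]
        congr 1
        simp
        omega
      have ih' := ih (L.drop 1) (by simp; omega) (hL.drop' 1) (by simp; omega)
        a (sufRW W) (by rw [ha, ← hdd]) hsuf
      have hb' : b = preRW W := RW.ext' (by rw [hb, hpre])
      rw [hb']
      have := add_mem ih' hedge
      rw [sub_add_sub_cancel] at this
      exact this

end Aux4
section Aux5

variable {n k : ℕ} (σ : List (Letter n) → List (Letter n))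

lemma reduced_glue (u : List (Letter n)) (t : Letter n) (v : List (Letter n))
    (hu : Reduced u) (hv : Reduced v)
    (h1 : ∀ a, u.getLast? = some a → t ≠ linv a)
    (h2 : ∀ a, v.head? = some a → a ≠ linv t) :
    Reduced (u ++ t :: v) := by
  rw [Reduced, List.Chain', List.isChain_append]
  refine ⟨hu, ?_, ?_⟩
  · rw [List.isChain_cons]
    exact ⟨fun y hy => h2 y hy, hv⟩
  · intro a ha y hy
    simp only [List.head?_cons, Option.mem_def, Option.some.injEq] at hy
    subst hy
    exact h1 a ha

/-- the base letter `x` -/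
def xL (hn : 2 ≤ n) : Letter n := (⟨0, by omega⟩, true)

/-- the auxiliary letter `y` -/
def yL (hn : 2 ≤ n) : Letter n := (⟨1, by omega⟩, true)

lemma reduced_replicate (a : Letter n) (m : ℕ) : Reduced (List.replicate m a) :=
  List.isChain_replicate_of_rel m (Ne.symm (linv_ne_self a))

/-- the base reduced word `x^(k-1)` -/
def baseRW (hn : 2 ≤ n) (hk : 2 ≤ k) : RW n (k-1) :=
  ⟨List.replicate (k-1) (xL hn), reduced_replicate _ _, by simp⟩

variable (hσ1 : ∀ u : List (Letter n), σ u = u ∨ σ u = wInv u)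
variable (hσ2 : ∀ u : List (Letter n), σ (wInv u) = σ u)

include hσ1 hσ2 in
lemma two_smul_mem (hn : 2 ≤ n) (hk : 2 ≤ k) :
    (2 : ℤ) • fV σ (baseRW hn hk) ∈ LinearMap.range (pOut n k σ - pIn n k σ) := by
  have hm1 : 1 ≤ k - 1 := by omega
  set x := xL hn with hx
  set y := yL hn with hy
  set L : List (Letter n) := List.replicate (k-1) x ++ y :: List.replicate (k-1) (linv x)
    with hLdef
  have hyx : y ≠ linv x := by
    simp [hx, hy, xL, yL, linv, Prod.ext_iff, Fin.ext_iff]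
  have hred : Reduced L := by
    apply reduced_glue _ _ _ (reduced_replicate _ _) (reduced_replicate _ _)
    · intro a ha
      rw [List.getLast?_replicate] at ha
      rw [if_neg (by omega)] at ha
      cases ha
      exact hyx
    · intro a ha
      rw [List.head?_replicate] at ha
      rw [if_neg (by omega)] at ha
      cases ha
      simp [hx, hy, xL, yL, linv, Prod.ext_iff, Fin.ext_iff]
  have hLlen : L.length = (k-1) + 1 + (k-1) := by simp [hLdef]; omega
  set a : RW n (k-1) := ⟨List.replicate (k-1) (linv x), reduced_replicate _ _, by simp⟩
    with hadef
  have ha : a.val = L.drop (L.length - (k-1)) := by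
    show List.replicate (k-1) (linv x) = L.drop (L.length - (k-1))
    rw [hLlen, hLdef, List.append_cons, show (k-1) + 1 + (k-1) - (k-1) = (k-1) + 1 by omega]
    rw [List.drop_left' (by simp)]
  have hb : (baseRW hn hk).val = L.take (k-1) := by
    show List.replicate (k-1) x = L.take (k-1)
    rw [hLdef, List.take_left' (by simp)]
  have htel := telescope σ hσ1 hσ2 hk L.length L rfl hred (by omega) a (baseRW hn hk) ha hb
  have hainv : fV σ a = - fV σ (baseRW hn hk) := by
    apply fV_wInv σ hσ1 hσ2 hm1
    show List.replicate (k-1) (linv x) = wInv (List.replicate (k-1) x)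
    simp [wInv]
  rw [hainv] at htel
  have hrw : - fV σ (baseRW hn hk) - fV σ (baseRW hn hk)
      = -((2:ℤ) • fV σ (baseRW hn hk)) := by
    rw [two_smul]; abel
  rw [hrw] at htel
  simpa using neg_mem htel

include hσ1 hσ2 in
lemma conn_mem (hn : 2 ≤ n) (hk : 2 ≤ k) (v : RW n (k-1)) :
    fV σ v - fV σ (baseRW hn hk) ∈ LinearMap.range (pOut n k σ - pIn n k σ) := by
  have hm1 : 1 ≤ k - 1 := by omega
  have hvne : v.val ≠ [] := by
    have := v.len
    intro h
    rw [h] at this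
    simp at this
    omega
  set x := xL hn with hx
  set a0 := v.val.head hvne with ha0
  set t : Letter n := if linv a0 = yL hn then (⟨1, by omega⟩, false) else yL hn with ht
  have htx : t ≠ linv x := by
    rw [ht]
    split <;> simp [hx, xL, yL, linv, Prod.ext_iff, Fin.ext_iff]
  have hta : t ≠ linv a0 := by
    rw [ht]
    split
    · rename_i h
      rw [h]
      simp [yL, Prod.ext_iff]
    · rename_i h
      exact fun hh => h hh.symm
  set L : List (Letter n) := List.replicate (k-1) x ++ t :: v.val with hLdef
  have hred : Reduced L := by
    apply reduced_glue _ _ _ (reduced_replicate _ _) v.red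
    · intro a ha
      rw [List.getLast?_replicate, if_neg (by omega)] at ha
      cases ha
      exact htx
    · intro a ha
      rw [List.head?_eq_head hvne] at ha
      cases ha
      intro hh
      exact hta (by rw [ha0, hh, linv_linv])
  have hLlen : L.length = (k-1) + 1 + (k-1) := by simp [hLdef, v.len]; omega
  have hav : v.val = L.drop (L.length - (k-1)) := by
    rw [hLlen, hLdef, List.append_cons, show (k-1) + 1 + (k-1) - (k-1) = (k-1) + 1 by omega]
    rw [List.drop_left' (by simp)]
  have hb : (baseRW hn hk).val = L.take (k-1) := by
    show List.replicate (k-1) x = L.take (k-1)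
    rw [hLdef, List.take_left' (by simp)]
  exact telescope σ hσ1 hσ2 hk L.length L rfl hred (by omega) v (baseRW hn hk) hav hb

end Aux5
section Aux6

variable {n k : ℕ} (σ : List (Letter n) → List (Letter n))
variable (hσ1 : ∀ u : List (Letter n), σ u = u ∨ σ u = wInv u)
variable (hσ2 : ∀ u : List (Letter n), σ (wInv u) = σ u)

lemma fV_apply {m : ℕ} (u : RW n m) (d : UW n m) :
    fV σ u d = sgn σ u * (if d = Quotient.mk (uwSetoid n m) u then 1 else 0) := by
  rw [fV, Pi.smul_apply, eV, smul_eq_mul]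

lemma sum_fV_single {m : ℕ} (u : RW n m) :
    ∑ d : UW n m, fV σ u d = sgn σ u := by
  simp only [fV_apply]
  rw [← Finset.mul_sum, Finset.sum_ite_eq' Finset.univ _ (fun _ => (1:ℤ))]
  simp

include hσ1 hσ2 in
lemma colsum_even (hk : 2 ≤ k) (wb : UW n k) :
    (2 : ℤ) ∣ ∑ ub : UW n (k-1), (AOut n k σ ub wb - AIn n k σ ub wb) := by
  obtain ⟨w0, hw0⟩ := Quotient.exists_rep wb
  have hex : ∃ w : RW n k, σ w.val = w.val ∧ Quotient.mk (uwSetoid n k) w = wb := by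
    rcases hσ1 w0.val with h | h
    · exact ⟨w0, h, hw0⟩
    · refine ⟨⟨wInv w0.val, w0.red.wInvR, by simp [w0.len]⟩, ?_, ?_⟩
      · show σ (wInv w0.val) = wInv w0.val
        rw [hσ2]; exact h
      · rw [← hw0]
        exact class_eq_of_wInv rfl
  obtain ⟨w, hw, hwb⟩ := hex
  have hcol := column_eq σ hσ1 hσ2 hk w hw
  have heV : eV w = Pi.single (Quotient.mk (uwSetoid n k) w) (1 : ℤ) := by
    funext c; rw [eV, Pi.single_apply]
  have hent : ∀ ub, AOut n k σ ub wb - AIn n k σ ub wb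
      = (fV σ (sufRW w) - fV σ (preRW w)) ub := by
    intro ub
    rw [← hcol, ← hwb, LinearMap.sub_apply, heV, pOut, pIn]
    simp only [Matrix.mulVecLin_apply, Matrix.mulVec_single_one, Matrix.col_apply, Pi.sub_apply, mul_one]
  simp only [hent, Pi.sub_apply]
  rw [Finset.sum_sub_distrib, sum_fV_single, sum_fV_single]
  rw [sgn, sgn]
  split <;> split <;> decide

include hσ1 hσ2 in
lemma range_subset_even (hk : 2 ≤ k) (x : Mk n (k-1))
    (hx : x ∈ LinearMap.range (pOut n k σ - pIn n k σ)) :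
    (2 : ℤ) ∣ ∑ ub : UW n (k-1), x ub := by
  obtain ⟨y, rfl⟩ := hx
  have expand : ∀ ub, ((pOut n k σ - pIn n k σ) y) ub
      = ∑ wb : UW n k, (AOut n k σ ub wb - AIn n k σ ub wb) * y wb := by
    intro ub
    rw [LinearMap.sub_apply, Pi.sub_apply, pOut, pIn]
    simp only [Matrix.mulVecLin_apply, Matrix.mulVec, dotProduct]
    rw [← Finset.sum_sub_distrib]
    congr 1
    funext wb
    ring
  simp only [expand]
  rw [Finset.sum_comm]
  apply Finset.dvd_sum
  intro wb _
  rw [← Finset.sum_mul]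
  exact Dvd.dvd.mul_right (colsum_even σ hσ1 hσ2 hk wb) _

include hσ1 hσ2 in
lemma even_subset_range (hn : 2 ≤ n) (hk : 2 ≤ k) (v : Mk n (k-1))
    (hv : (2 : ℤ) ∣ ∑ ub : UW n (k-1), v ub) :
    v ∈ LinearMap.range (pOut n k σ - pIn n k σ) := by
  classical
  set R := LinearMap.range (pOut n k σ - pIn n k σ) with hR
  set m : UW n (k-1) → ℤ := fun c => v c * sgn σ (Quotient.out c) with hm
  have term_eq : ∀ (c d : UW n (k-1)), (m c • fV σ (Quotient.out c)) d
      = if d = c then v c else 0 := by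
    intro c d
    rw [Pi.smul_apply, fV_apply, Quotient.out_eq, smul_eq_mul, hm]
    have hs := sgn_mul_self σ (Quotient.out c)
    by_cases hdc : d = c
    · rw [if_pos hdc, if_pos hdc, mul_one]
      calc v c * sgn σ (Quotient.out c) * sgn σ (Quotient.out c)
          = v c * (sgn σ (Quotient.out c) * sgn σ (Quotient.out c)) := by ring
        _ = v c := by rw [hs, mul_one]
    · rw [if_neg hdc, if_neg hdc, mul_zero, mul_zero]
  have sum_fV : ∑ c : UW n (k-1), m c • fV σ (Quotient.out c) = v := by
    funext d
    rw [Finset.sum_apply]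
    simp only [term_eq]
    rw [Finset.sum_ite_eq Finset.univ d v]
    simp
  have hdecomp : v = (∑ c : UW n (k-1), m c • (fV σ (Quotient.out c) - fV σ (baseRW hn hk)))
      + (∑ c : UW n (k-1), m c) • fV σ (baseRW hn hk) := by
    rw [Finset.sum_smul, ← Finset.sum_add_distrib, ← sum_fV]
    apply Finset.sum_congr rfl
    intro c _
    rw [smul_sub, sub_add_cancel]
  rw [hdecomp]
  apply Submodule.add_mem
  · apply Submodule.sum_mem
    intro c _
    exact Submodule.smul_mem _ _ (conn_mem σ hσ1 hσ2 hn hk (Quotient.out c))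
  · have hpar : (2:ℤ) ∣ ∑ c : UW n (k-1), m c := by
      have h1 : (2:ℤ) ∣ ∑ c : UW n (k-1), (m c - v c) := by
        apply Finset.dvd_sum
        intro c _
        rw [hm]
        simp only
        rw [sgn]
        split
        · simp
        · exact ⟨-(v c), by ring⟩
      rw [Finset.sum_sub_distrib] at h1
      obtain ⟨d1, hd1⟩ := h1
      obtain ⟨d2, hd2⟩ := hv
      exact ⟨d1 + d2, by omega⟩
    obtain ⟨d, hd⟩ := hpar
    rw [hd, mul_comm, mul_smul]
    exact Submodule.smul_mem _ _ (two_smul_mem σ hσ1 hσ2 hn hk)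

end Aux6
/-- The image of `p←_k - p→_k` is the set of vectors of `M_{k-1}`
with even coordinate sum, and its cokernel is isomorphic to `ℤ/2ℤ`. -/
theorem range_and_coker (n k : ℕ) (hn : 2 ≤ n) (hk : 2 ≤ k)
    (σ : List (Letter n) → List (Letter n))
    (hσ1 : ∀ u : List (Letter n), σ u = u ∨ σ u = wInv u)
    (hσ2 : ∀ u : List (Letter n), σ (wInv u) = σ u) :
    (LinearMap.range (pOut n k σ - pIn n k σ) : Set (Mk n (k - 1)))
        = {v : Mk n (k - 1) | (2 : ℤ) ∣ ∑ ub : UW n (k - 1), v ub} ∧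
    Nonempty ((Mk n (k - 1) ⧸ LinearMap.range (pOut n k σ - pIn n k σ)) ≃ₗ[ℤ] ZMod 2) := by
  have hrange : ∀ v : Mk n (k-1),
      v ∈ LinearMap.range (pOut n k σ - pIn n k σ) ↔ (2:ℤ) ∣ ∑ ub : UW n (k-1), v ub :=
    fun v => ⟨range_subset_even σ hσ1 hσ2 hk v, even_subset_range σ hσ1 hσ2 hn hk v⟩
  constructor
  · exact Set.ext (fun v => by simpa using hrange v)
  · classical
    let S : Mk n (k-1) →ₗ[ℤ] ℤ :=
      { toFun := fun v => ∑ c : UW n (k-1), v c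
        map_add' := by
          intro a b
          simp [Finset.sum_add_distrib]
        map_smul' := by
          intro r a
          simp [Finset.mul_sum] }
    let c2 : ℤ →ₗ[ℤ] ZMod 2 := (Int.castAddHom (ZMod 2)).toIntLinearMap
    let φ : Mk n (k-1) →ₗ[ℤ] ZMod 2 := c2.comp S
    have hφ : ∀ v : Mk n (k-1), φ v = (((∑ c : UW n (k-1), v c) : ℤ) : ZMod 2) :=
      fun v => rfl
    have hker : LinearMap.range (pOut n k σ - pIn n k σ) = LinearMap.ker φ := by
      ext v
      rw [LinearMap.mem_ker, hφ, ZMod.intCast_zmod_eq_zero_iff_dvd]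
      rw [show ((2:ℕ):ℤ) = (2:ℤ) by norm_num]
      exact hrange v
    have hsurj : Function.Surjective φ := by
      intro z
      obtain ⟨mz, rfl⟩ := ZMod.intCast_surjective z
      refine ⟨mz • eV (baseRW hn hk), ?_⟩
      rw [hφ]
      have : ∑ c : UW n (k-1), (mz • eV (baseRW hn hk)) c = mz := by
        simp only [Pi.smul_apply, eV, smul_eq_mul]
        rw [← Finset.mul_sum, Finset.sum_ite_eq' Finset.univ _ (fun _ => (1:ℤ))]
        simp
      rw [this]
    exact ⟨(Submodule.quotEquivOfEq _ _ hker).trans (φ.quotKerEquivOfSurjective hsurj)⟩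
end
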